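/- arXiv:1007.4475 — 2 statements merged into one kernel-verified Lean document; each statement's English description precedes it below -/
import Mathlib

section
/- Fix i₀ ∈ I and λ₀ ∈ Λ with p := p_{λ₀ i₀} ≠ 𝐨, and set e = δ_{(i₀, p⁻¹, λ₀)} ∈ A, which is an idempotent. The ℂ-linear map φ from the group algebra MonoidAlgebra ℂ G to A determined on basis vectors by φ(δ_g) = δ_{(i₀, g p⁻¹, λ₀)} is an injective multiplicative (algebra) homomorphism whose range equals the corner {e * a * e : a ∈ A}. In particular the corner algebra eAe is isomorphic, as a ℂ-algebra, to the group algebra of G. -/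
open scoped Classical

/-- The product of two nonzero elements of the Rees semigroup `S(G; I, Λ; P)`,
taking values in `S = WithZero (I × G × Λ)`: the result is
`(i, g * p_{λ j} * h, μ)` if the sandwich entry `p_{λ j}` is nonzero, and `∅ = 0`
otherwise. -/
noncomputable def reesMulAux {G I Λ : Type*} [Group G] (P : Λ → I → WithZero G)
    (s t : I × G × Λ) : WithZero (I × G × Λ) :=
  if h : P s.2.2 t.1 = 0 then 0
  else (((s.1, s.2.1 * WithZero.unzero h * t.2.1, t.2.2) : I × G × Λ) :
    WithZero (I × G × Λ))

/-- The Rees multiplication on `S = (I × G × Λ) ∪ {∅} = WithZero (I × G × Λ)`,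
where the adjoined zero `∅ = 0` is absorbing. -/
noncomputable def reesMul {G I Λ : Type*} [Group G] (P : Λ → I → WithZero G)
    (x y : WithZero (I × G × Λ)) : WithZero (I × G × Λ) :=
  if hx : x = 0 then 0
  else if hy : y = 0 then 0
  else reesMulAux P (WithZero.unzero hx) (WithZero.unzero hy)

/-- The product `δ_s * δ_t` of two basis vectors of the contracted semigroup algebra
`A = ℂ₀[S]`: it is `δ_{s·t}` if `s·t ≠ ∅` in `S`, and `0` if `s·t = ∅`. -/
noncomputable def reesDelta {G I Λ : Type*} [Group G] (P : Λ → I → WithZero G)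
    (s t : I × G × Λ) : (I × G × Λ) →₀ ℂ :=
  if h : P s.2.2 t.1 = 0 then 0
  else Finsupp.single (s.1, s.2.1 * WithZero.unzero h * t.2.1, t.2.2) (1 : ℂ)

/-- The multiplication of the contracted semigroup algebra `A = ℂ₀[S]`, as the
(unique) bilinear map determined on basis vectors by `δ_s * δ_t = δ_{s·t}` if
`s·t ≠ ∅` in `S` and `δ_s * δ_t = 0` if `s·t = ∅`. -/
noncomputable def reesAlgMul {G I Λ : Type*} [Group G] (P : Λ → I → WithZero G) :
    ((I × G × Λ) →₀ ℂ) →ₗ[ℂ] ((I × G × Λ) →₀ ℂ) →ₗ[ℂ] ((I × G × Λ) →₀ ℂ) :=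
  Finsupp.lift (((I × G × Λ) →₀ ℂ) →ₗ[ℂ] ((I × G × Λ) →₀ ℂ)) ℂ (I × G × Λ)
    fun s => Finsupp.lift ((I × G × Λ) →₀ ℂ) ℂ (I × G × Λ) fun t => reesDelta P s t


lemma reesAlgMul_single_single {G I Λ : Type*} [Group G] (P : Λ → I → WithZero G)
    (s t : I × G × Λ) (c d : ℂ) :
    reesAlgMul P (Finsupp.single s c) (Finsupp.single t d) = (c * d) • reesDelta P s t := by
  simp only [reesAlgMul, Finsupp.lift_apply]
  rw [Finsupp.sum_single_index (by simp)]
  simp only [LinearMap.smul_apply, Finsupp.lift_apply]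
  rw [Finsupp.sum_single_index (by simp)]
  rw [smul_smul]

/-- for fixed `i₀ ∈ I`, `λ₀ ∈ Λ` with `p := p_{λ₀ i₀} ≠ 𝐨`, the element
`e = δ_{(i₀, p⁻¹, λ₀)}` of `A = ℂ₀[S]` is idempotent, and the `ℂ`-linear map
`φ : MonoidAlgebra ℂ G → A` determined by `φ(δ_g) = δ_{(i₀, g p⁻¹, λ₀)}` is an
injective multiplicative (algebra) homomorphism whose range is the corner
`{e * a * e : a ∈ A}`; in particular `eAe` is isomorphic as a `ℂ`-algebra to the
group algebra of `G`. -/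
theorem rees_corner_iso_group_algebra
    {G I Λ : Type*} [Group G] [Nonempty I] [Nonempty Λ]
    (P : Λ → I → WithZero G)
    (hrow : ∀ lam : Λ, ∃ i : I, P lam i ≠ 0)
    (hcol : ∀ i : I, ∃ lam : Λ, P lam i ≠ 0)
    (i₀ : I) (lam₀ : Λ) (hp : P lam₀ i₀ ≠ 0) :
    (reesAlgMul P (Finsupp.single ((i₀, (WithZero.unzero hp)⁻¹, lam₀) : I × G × Λ) (1 : ℂ))
        (Finsupp.single ((i₀, (WithZero.unzero hp)⁻¹, lam₀) : I × G × Λ) (1 : ℂ))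
      = Finsupp.single ((i₀, (WithZero.unzero hp)⁻¹, lam₀) : I × G × Λ) (1 : ℂ)) ∧
    Function.Injective
      (Finsupp.lmapDomain ℂ ℂ (fun g : G => ((i₀, g * (WithZero.unzero hp)⁻¹, lam₀) : I × G × Λ))) ∧
    (∀ x y : MonoidAlgebra ℂ G,
      Finsupp.lmapDomain ℂ ℂ (fun g : G => ((i₀, g * (WithZero.unzero hp)⁻¹, lam₀) : I × G × Λ))
          (x * y).coeff
        = reesAlgMul P
            (Finsupp.lmapDomain ℂ ℂ
              (fun g : G => ((i₀, g * (WithZero.unzero hp)⁻¹, lam₀) : I × G × Λ)) x.coeff)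
            (Finsupp.lmapDomain ℂ ℂ
              (fun g : G => ((i₀, g * (WithZero.unzero hp)⁻¹, lam₀) : I × G × Λ)) y.coeff)) ∧
    (Set.range (Finsupp.lmapDomain ℂ ℂ
        (fun g : G => ((i₀, g * (WithZero.unzero hp)⁻¹, lam₀) : I × G × Λ)))
      = {z : (I × G × Λ) →₀ ℂ | ∃ a : (I × G × Λ) →₀ ℂ,
          z = reesAlgMul P
            (reesAlgMul P
              (Finsupp.single ((i₀, (WithZero.unzero hp)⁻¹, lam₀) : I × G × Λ) (1 : ℂ)) a)
            (Finsupp.single ((i₀, (WithZero.unzero hp)⁻¹, lam₀) : I × G × Λ) (1 : ℂ))}) := by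
  
  classical
  set p : G := WithZero.unzero hp with hpdef
  set f : G → I × G × Λ := fun g => (i₀, g * p⁻¹, lam₀) with hf
  set e : (I × G × Λ) →₀ ℂ := Finsupp.single ((i₀, p⁻¹, lam₀) : I × G × Λ) 1 with he
  have hfi : Function.Injective f := by
    intro a b hab
    simpa [hf, Prod.ext_iff] using hab
  -- key computation of reesDelta at points with middle coords over i₀, lam₀
  have hdelta : ∀ (g h : G) (j : I) (mu : Λ),
      reesDelta P (j, g, lam₀) (i₀, h, mu)
        = Finsupp.single ((j, g * p * h, mu) : I × G × Λ) 1 := by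
    intro g h j mu
    simp only [reesDelta]
    rw [dif_neg hp]
  have hmul : ∀ (g h : G) (j : I) (mu : Λ) (c d : ℂ),
      reesAlgMul P (Finsupp.single ((j, g, lam₀) : I × G × Λ) c)
          (Finsupp.single ((i₀, h, mu) : I × G × Λ) d)
        = Finsupp.single ((j, g * p * h, mu) : I × G × Λ) (c * d) := by
    intro g h j mu c d
    rw [reesAlgMul_single_single, hdelta, Finsupp.smul_single', mul_one]
  have hee : reesAlgMul P e e = e := by
    rw [he, hmul]
    simp
  refine ⟨hee, Finsupp.mapDomain_injective hfi, ?_, ?_⟩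
  · -- multiplicativity
    intro x y
    induction x using MonoidAlgebra.induction_linear with
    | zero => simp
    | add a b ha hb =>
        simp [map_add, add_mul, ha, hb, MonoidAlgebra.coeff_add]
    | single g c =>
        induction y using MonoidAlgebra.induction_linear with
        | zero => simp
        | add a b ha hb =>
            simp [map_add, mul_add, ha, hb, MonoidAlgebra.coeff_add]
        | single h d =>
            rw [MonoidAlgebra.single_mul_single]
            simp only [MonoidAlgebra.coeff_single, Finsupp.lmapDomain_apply, Finsupp.mapDomain_single]
            rw [hmul]
            simp only [hf]
            congr 2
            group
  · -- range
    ext z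
    constructor
    · rintro ⟨x, rfl⟩
      refine ⟨Finsupp.lmapDomain ℂ ℂ f x, ?_⟩
      induction x using Finsupp.induction_linear with
      | zero => simp
      | add a b ha hb =>
          simp only [map_add, LinearMap.add_apply]
          rw [← ha, ← hb]
      | single g c =>
          simp only [Finsupp.lmapDomain_apply, Finsupp.mapDomain_single]
          rw [he]
          show Finsupp.single (f g) c = _
          rw [hf]
          rw [hmul, hmul]
          congr 2
          · group
          · simp
    · rintro ⟨a, rfl⟩
      -- show e * a * e ∈ range
      induction a using Finsupp.induction_linear with
      | zero => exact ⟨0, by simp⟩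
      | add a b ha hb =>
          obtain ⟨xa, hxa⟩ := ha
          obtain ⟨xb, hxb⟩ := hb
          exact ⟨xa + xb, by simp [map_add, hxa, hxb]⟩
      | single s c =>
          obtain ⟨j, g, mu⟩ := s
          by_cases h1 : P lam₀ j = 0
          · refine ⟨0, ?_⟩
            have : reesAlgMul P e (Finsupp.single ((j, g, mu) : I × G × Λ) c) = 0 := by
              rw [he, reesAlgMul_single_single]
              simp only [reesDelta]
              rw [dif_pos h1, smul_zero]
            rw [this]
            simp
          · set q : G := WithZero.unzero h1 with hq
            have h2 : reesAlgMul P e (Finsupp.single ((j, g, mu) : I × G × Λ) c)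
                = Finsupp.single ((i₀, p⁻¹ * q * g, mu) : I × G × Λ) c := by
              rw [he, reesAlgMul_single_single]
              simp only [reesDelta]
              rw [dif_neg h1, Finsupp.smul_single', one_mul, mul_one]
            rw [h2]
            by_cases h3 : P mu i₀ = 0
            · refine ⟨0, ?_⟩
              have : reesAlgMul P (Finsupp.single ((i₀, p⁻¹ * q * g, mu) : I × G × Λ) c) e = 0 := by
                rw [he, reesAlgMul_single_single]
                simp only [reesDelta]
                rw [dif_pos h3, smul_zero]
              rw [this]; simp
            · set r : G := WithZero.unzero h3 with hr
              refine ⟨Finsupp.single (p⁻¹ * q * g * r * p⁻¹ * p) c, ?_⟩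
              simp only [Finsupp.lmapDomain_apply, Finsupp.mapDomain_single]
              rw [he, reesAlgMul_single_single]
              simp only [reesDelta]
              rw [dif_neg h3, Finsupp.smul_single', mul_one]
              show Finsupp.single (f _) c = _
              rw [hf]
              congr 2
              group
              rfl
              exact (mul_one c).symm
end

section
/- Let n be a positive natural number and let S be the Rees semigroup with trivial group G = {1}, index sets I = Λ = Fin n, and sandwich matrix P λ i equal to 1 if λ = i and to 𝐨 otherwise (so S is the system of n×n matrix units together with a zero). Then the contracted semigroup algebra ℂ₀[S] is isomorphic as a ℂ-algebra to the full matrix algebra Matrix (Fin n) (Fin n) ℂ, via the map sending the basis vector indexed by (i, 1, j) to the standard matrix unit E_{ij} (the matrix with 1 in entry (i,j) and 0 elsewhere). -/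
open scoped Classical

noncomputable def myF (n : ℕ) : ((Fin n × PUnit × Fin n) →₀ ℂ) ≃ₗ[ℂ] Matrix (Fin n) (Fin n) ℂ where
  toFun f := Matrix.of fun i j => f (i, PUnit.unit, j)
  invFun M := Finsupp.equivFunOnFinite.symm fun x => M x.1 x.2.2
  map_add' f g := by ext i j; simp
  map_smul' c f := by ext i j; simp
  left_inv f := by
    ext x
    obtain ⟨i, u, j⟩ := x
    cases u
    simp [Finsupp.equivFunOnFinite]
  right_inv M := by ext i j; simp [Finsupp.equivFunOnFinite]


lemma reesAlgMul_single {G I Λ : Type*} [Group G] (P : Λ → I → WithZero G)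
    (s t : I × G × Λ) :
    reesAlgMul P (Finsupp.single s 1) (Finsupp.single t 1) = reesDelta P s t := by
  simp [reesAlgMul, Finsupp.lift_apply, Finsupp.sum_single_index]

lemma single_eq (n : ℕ) (i j : Fin n) :
    myF n (Finsupp.single ((i, PUnit.unit, j) : Fin n × PUnit × Fin n) (1 : ℂ))
      = Matrix.single i j (1 : ℂ) := by
  ext i' j'
  show (Finsupp.single ((i, PUnit.unit, j) : Fin n × PUnit × Fin n) (1 : ℂ)) (i', PUnit.unit, j')
      = _
  simp [Finsupp.single_apply, Matrix.single, Prod.ext_iff, and_comm]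

def P' (n : ℕ) : Fin n → Fin n → WithZero PUnit :=
  fun lam i => if lam = i then (1 : WithZero PUnit) else 0

lemma key (n : ℕ) (s t : Fin n × PUnit × Fin n) :
    myF n (reesDelta (P' n) s t) = myF n (Finsupp.single s 1) * myF n (Finsupp.single t 1) := by
  obtain ⟨i, u, j⟩ := s; obtain ⟨k, v, l⟩ := t; cases u; cases v
  rw [single_eq, single_eq]
  by_cases h : j = k
  · subst h
    rw [Matrix.single_mul_single_same (c := 1) i j l 1]
    have hP : P' n j j ≠ 0 := by
      show (if j = j then (1 : WithZero PUnit) else 0) ≠ 0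
      rw [if_pos rfl]; exact (WithZero.coe_ne_zero : ((1 : PUnit) : WithZero PUnit) ≠ 0)
    rw [reesDelta]
    rw [dif_neg hP]
    have : (PUnit.unit * WithZero.unzero hP * PUnit.unit : PUnit) = PUnit.unit := rfl
    rw [this, one_mul]; exact single_eq n i l
  · rw [Matrix.single_mul_single_of_ne (c := 1) i j k h 1]
    have hP : P' n j k = 0 := by simp [P', h]
    rw [reesDelta, dif_pos hP, map_zero]

/-- for `n > 0`, the contracted algebra of the Rees semigroup over the
trivial group with `I = Λ = Fin n` and identity sandwich matrix (the semigroup of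
`n × n` matrix units with zero) is isomorphic as a `ℂ`-algebra to the full matrix
algebra `Matrix (Fin n) (Fin n) ℂ`, via `δ_{(i, 1, j)} ↦ E_{ij}`. -/
theorem rees_matrix_units_algebra_iso_matrix
    (n : ℕ) (hn : 0 < n) :
    ∃ F : ((Fin n × PUnit × Fin n) →₀ ℂ) ≃ₗ[ℂ] Matrix (Fin n) (Fin n) ℂ,
      (∀ a b : (Fin n × PUnit × Fin n) →₀ ℂ,
        F (reesAlgMul (fun lam i : Fin n => if lam = i then (1 : WithZero PUnit) else 0) a b)
          = F a * F b) ∧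
      (∀ i j : Fin n,
        F (Finsupp.single ((i, PUnit.unit, j) : Fin n × PUnit × Fin n) (1 : ℂ))
          = Matrix.single i j (1 : ℂ)) := by
  refine ⟨myF n, ?_, single_eq n⟩
  have hsingle : ∀ s t : Fin n × PUnit × Fin n,
      myF n (reesAlgMul (P' n) (Finsupp.single s 1) (Finsupp.single t 1))
        = myF n (Finsupp.single s 1) * myF n (Finsupp.single t 1) := by
    intro s t
    rw [reesAlgMul_single]
    exact key n s t
  intro a b
  induction a using Finsupp.induction_linear with
  | zero => simp
  | add f g hf hg => simp only [map_add, LinearMap.add_apply, add_mul, hf, hg]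
  | single s c =>
    induction b using Finsupp.induction_linear with
    | zero => simp
    | add f g hf hg => simp only [map_add, mul_add, hf, hg]
    | single t d =>
      have h1 : (Finsupp.single s c : (Fin n × PUnit × Fin n) →₀ ℂ) = c • Finsupp.single s 1 := by
        rw [Finsupp.smul_single, smul_eq_mul, mul_one]
      have h2 : (Finsupp.single t d : (Fin n × PUnit × Fin n) →₀ ℂ) = d • Finsupp.single t 1 := by
        rw [Finsupp.smul_single, smul_eq_mul, mul_one]
      simp only [h1, h2, map_smul, LinearMap.smul_apply, smul_mul_assoc, mul_smul_comm,
        smul_smul]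
      congr 1
      exact hsingle s t
end
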